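/- Let A ∈ ℤ^{n×m} have full row rank, b ∈ ℤⁿ, and let γ_A = gcd of the nonzero entries of A. Let D be the maximum absolute value of determinants of square submatrices of A/γ_A of dimension n−1 or n. Then for any basic feasible solution f of {Af = b, f ≥ 0}, we have ‖f‖_∞ ≤ D·‖b/γ_A‖₁, and moreover f_j ≠ 0 implies |f_j| ≥ 1/(D·γ_A). -/

import Mathlib

lemma aux_det_updateCol_single {n : ℕ} (M : Matrix (Fin (n+1)) (Fin (n+1)) ℝ)
    (i k : Fin (n+1)) :
    |Matrix.det (M.updateCol k (Pi.single i 1))| =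
      |Matrix.det (M.submatrix i.succAbove k.succAbove)| := by
  have hsub : (M.updateCol k (Pi.single i 1)).submatrix i.succAbove k.succAbove
      = M.submatrix i.succAbove k.succAbove := by
    ext a c
    simp [Matrix.updateCol_apply, Fin.succAbove_ne k c]
  rw [Matrix.det_succ_column _ k, Finset.sum_eq_single i]
  · rw [hsub]
    simp [Matrix.updateCol_apply, abs_mul, abs_pow]
  · intro r _ hri
    simp [Matrix.updateCol_apply, Pi.single_apply, hri]
  · intro h; exact absurd (Finset.mem_univ i) h

/-- Extraction of a basis of columns containing the support of `f`. -/
lemma aux_extract {n m : ℕ} (A : Matrix (Fin n) (Fin m) ℤ) (f : Fin m → ℝ) (hm : 0 < m)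
    (hrank : LinearIndependent ℝ (fun i : Fin n => fun j => (A i j : ℝ)))
    (hind : LinearIndependent ℝ
      (fun j : {j : Fin m // f j ≠ 0} => fun i => (A i j.1 : ℝ))) :
    ∃ r : Fin n → Fin m, Function.Injective r ∧ (∀ j, f j ≠ 0 → ∃ k, r k = j) ∧
      LinearIndependent ℝ (fun k : Fin n => fun i => (A i (r k) : ℝ)) := by
  classical
  let colR : Fin m → (Fin n → ℝ) := fun j i => (A i j : ℝ)
  let supp : Set (Fin m) := {j | f j ≠ 0}
  have hli : LinearIndependent ℝ (fun j : supp => colR j) := hind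
  have hinj : Set.InjOn colR supp := Set.injOn_iff_injective.2 hli.injective
  have hset : LinearIndepOn ℝ id (colR '' supp) := LinearIndepOn.id_image (v := colR) (s := supp) hli
  have hspan : Submodule.span ℝ (Set.range colR) = ⊤ := by
    have h1 : (Matrix.of fun i j => (A i j : ℝ)).rank = n := by
      rw [← Matrix.rank_transpose, Matrix.rank_eq_finrank_span_cols,
        Matrix.col, Matrix.transpose_transpose]
      have hrange : Set.range (Matrix.of fun i j => ((A i j : ℤ) : ℝ))
          = Set.range (fun i : Fin n => fun j => ((A i j : ℤ) : ℝ)) := rfl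
      rw [hrange, finrank_span_eq_card hrank]
      exact Fintype.card_fin n
    apply Submodule.eq_top_of_finrank_eq
    have h3 : Set.range colR
        = Set.range (Matrix.col (Matrix.of fun i j => ((A i j : ℤ) : ℝ))) := rfl
    rw [h3, ← Matrix.rank_eq_finrank_span_cols, h1, Module.finrank_fin_fun]
  have hst : colR '' supp ⊆ Set.range colR := Set.image_subset_range _ _
  have hb_li : LinearIndependent ℝ ((↑) : hset.extend hst → (Fin n → ℝ)) :=
    hset.linearIndepOn_extend hst
  have hb_sub : hset.extend hst ⊆ Set.range colR := hset.extend_subset hst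
  have hs_sub : colR '' supp ⊆ hset.extend hst := hset.subset_extend hst
  have hb_span : Submodule.span ℝ (hset.extend hst) = ⊤ := by
    rw [hset.span_extend_eq_span hst, hspan]
  have hb_fin : (hset.extend hst).Finite := hb_li.setFinite
  have : Fintype (hset.extend hst) := hb_fin.fintype
  have hb_card : (hset.extend hst).toFinset.card = n := by
    have := finrank_span_set_eq_card hb_li
    rw [hb_span] at this
    rw [← this, finrank_top, Module.finrank_fin_fun]
  -- the picking map
  let q : (Fin n → ℝ) → Fin m := fun v =>
    if h1 : ∃ j, f j ≠ 0 ∧ colR j = v then h1.choose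
    else if h2 : ∃ j, colR j = v then h2.choose else ⟨0, hm⟩
  have hq_col : ∀ v ∈ hset.extend hst, colR (q v) = v := by
    intro v hv
    by_cases h1 : ∃ j, f j ≠ 0 ∧ colR j = v
    · simp only [q, dif_pos h1]; exact h1.choose_spec.2
    · have h2 : ∃ j, colR j = v := hb_sub hv
      simp only [q, dif_neg h1, dif_pos h2]
      exact h2.choose_spec
  have hq_supp : ∀ j, f j ≠ 0 → q (colR j) = j := by
    intro j hj
    have h1 : ∃ j', f j' ≠ 0 ∧ colR j' = colR j := ⟨j, hj, rfl⟩
    simp only [q, dif_pos h1]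
    exact hinj h1.choose_spec.1 hj h1.choose_spec.2
  let Bf : Finset (Fin m) := (hset.extend hst).toFinset.image q
  have hBf_col : ∀ j ∈ Bf, colR j ∈ hset.extend hst ∧ q (colR j) = j := by
    intro j hj
    obtain ⟨v, hv, rfl⟩ := Finset.mem_image.1 hj
    rw [Set.mem_toFinset] at hv
    rw [hq_col v hv]
    exact ⟨hv, rfl⟩
  have hBf_card : Bf.card = n := by
    rw [show Bf = (hset.extend hst).toFinset.image q from rfl,
      Finset.card_image_of_injOn, hb_card]
    intro v hv v' hv' hqq
    simp only [Finset.mem_coe, Set.mem_toFinset] at hv hv'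
    rw [← hq_col v hv, ← hq_col v' hv', hqq]
  let e := Bf.orderIsoOfFin hBf_card
  refine ⟨fun k => (e k : Fin m), fun a c h => e.injective (Subtype.ext h), ?_, ?_⟩
  · intro j hj
    have hv : colR j ∈ hset.extend hst := hs_sub ⟨j, hj, rfl⟩
    have hmem : j ∈ Bf := by
      have : q (colR j) ∈ Bf :=
        Finset.mem_image_of_mem q (Set.mem_toFinset.2 hv)
      rwa [hq_supp j hj] at this
    exact ⟨e.symm ⟨j, hmem⟩, by simp⟩
  · have hr_mem : ∀ k : Fin n, ((e k : Fin m)) ∈ Bf := fun k => (e k).2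
    have hmap : ∀ k, colR (e k : Fin m) ∈ hset.extend hst :=
      fun k => (hBf_col _ (hr_mem k)).1
    refine hb_li.comp (fun k : Fin n => (⟨colR (e k : Fin m), hmap k⟩ : hset.extend hst)) ?_
    intro a c h
    have h' : colR (e a : Fin m) = colR (e c : Fin m) := congrArg Subtype.val h
    have : (e a : Fin m) = (e c : Fin m) := by
      rw [← (hBf_col _ (hr_mem a)).2, ← (hBf_col _ (hr_mem c)).2, h']
    exact e.injective (Subtype.ext this)

/-- Bounds on basic feasible solutions of an integral system via the
scale-invariant determinant D and the gcd γ of the entries of A. -/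
theorem bfs_bounds {n m : ℕ} (A : Matrix (Fin n) (Fin m) ℤ) (b : Fin n → ℤ)
    (hrank : LinearIndependent ℝ (fun i : Fin n => fun j => (A i j : ℝ)))
    (γ : ℤ)
    (hγ : γ = (Finset.univ.filter (fun p : Fin n × Fin m => A p.1 p.2 ≠ 0)).gcd
      (fun p => A p.1 p.2))
    (hγpos : 0 < γ)
    (D : ℝ) (hDpos : 0 < D)
    (hD : ∀ (k : ℕ), (k = n - 1 ∨ k = n) →
      ∀ (r : Fin k → Fin n) (s : Fin k → Fin m),
        Function.Injective r → Function.Injective s →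
        |Matrix.det (Matrix.of fun i j => (A (r i) (s j) : ℝ) / (γ : ℝ))| ≤ D)
    (f : Fin m → ℝ)
    (hbfs : (Matrix.of fun i j => (A i j : ℝ)).mulVec f = (fun i => (b i : ℝ)) ∧
      0 ≤ f ∧
      LinearIndependent ℝ
        (fun j : {j : Fin m // f j ≠ 0} => fun i => (A i j.1 : ℝ))) :
    (∀ j, |f j| ≤ D * ∑ i, |(b i : ℝ) / (γ : ℝ)|) ∧
    (∀ j, f j ≠ 0 → 1 / (D * (γ : ℝ)) ≤ |f j|) := by
  classical
  obtain ⟨heq, hfpos, hind⟩ := hbfs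
  have hγr0 : (0:ℝ) < (γ : ℝ) := by exact_mod_cast hγpos
  -- γ divides all entries
  have hdvd : ∀ i j, γ ∣ A i j := by
    intro i j
    by_cases h : A i j = 0
    · exact h ▸ dvd_zero γ
    · rw [hγ]
      exact Finset.gcd_dvd (b := (i, j)) (by simp [h])
  -- trivial case n = 0
  rcases Nat.eq_zero_or_pos n with hn0 | hnpos
  · subst hn0
    have hf0 : ∀ j, f j = 0 := by
      intro j
      by_contra hj
      exact (hind.ne_zero ⟨j, hj⟩) (funext fun i => i.elim0)
    refine ⟨fun j => ?_, fun j hj => absurd (hf0 j) hj⟩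
    simp [hf0 j]
  obtain ⟨n', rfl⟩ : ∃ n', n = n' + 1 := ⟨n - 1, by omega⟩
  have hnm : n' + 1 ≤ m := by
    have := hrank.fintype_card_le_finrank
    simpa [Module.finrank_fin_fun] using this
  obtain ⟨r, hrinj, hrsupp, hNli⟩ := aux_extract A f (by omega) hrank hind
  -- the scaled integer matrix
  have hA' : ∀ i j, ((A i j / γ : ℤ) : ℝ) = (A i j : ℝ) / (γ : ℝ) := by
    intro i j
    obtain ⟨c, hc⟩ := hdvd i j
    rw [hc, Int.mul_ediv_cancel_left c hγpos.ne']
    push_cast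
    rw [mul_div_cancel_left₀ _ hγr0.ne']
  let M : Matrix (Fin (n'+1)) (Fin (n'+1)) ℝ :=
    Matrix.of fun i k => (A i (r k) : ℝ) / (γ : ℝ)
  let M' : Matrix (Fin (n'+1)) (Fin (n'+1)) ℤ := Matrix.of fun i k => A i (r k) / γ
  let w : Fin (n'+1) → ℝ := fun i => (b i : ℝ) / (γ : ℝ)
  have hM_map : M = M'.map (Int.cast : ℤ → ℝ) := by
    ext i k
    rw [Matrix.map_apply]
    exact (hA' i (r k)).symm
  -- the unscaled columns are linearly independent, hence `det M ≠ 0`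
  have hNdet : (Matrix.of fun i k => ((A i (r k) : ℤ) : ℝ)).det ≠ 0 := by
    intro h0
    obtain ⟨v, hv0, hv⟩ := Matrix.exists_mulVec_eq_zero_iff.2 h0
    apply hv0
    have h1 := Fintype.linearIndependent_iff.1 hNli v ?_
    · funext k; exact h1 k
    · funext i
      have h2 := congrFun hv i
      simp only [Matrix.mulVec, dotProduct, Matrix.of_apply, Pi.zero_apply] at h2
      simp only [Finset.sum_apply, Pi.smul_apply, smul_eq_mul, Pi.zero_apply]
      rw [← h2]
      exact Finset.sum_congr rfl fun k _ => mul_comm _ _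
  have hMN : M = ((γ:ℝ)⁻¹) • (Matrix.of fun i k => ((A i (r k) : ℤ) : ℝ)) := by
    ext i k
    simp only [Matrix.smul_apply, Matrix.of_apply, smul_eq_mul]
    exact div_eq_inv_mul _ _
  have hMdet_ne : M.det ≠ 0 := by
    rw [hMN, Matrix.det_smul]
    exact mul_ne_zero (pow_ne_zero _ (inv_ne_zero hγr0.ne')) hNdet
  -- the system restricted to the chosen columns
  have hNg : (Matrix.of fun i k => ((A i (r k) : ℤ) : ℝ)).mulVec (fun k => f (r k))
      = fun i => (b i : ℝ) := by
    funext i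
    have h0 := congrFun heq i
    simp only [Matrix.mulVec, dotProduct, Matrix.of_apply] at h0 ⊢
    rw [← h0]
    calc ∑ k, ((A i (r k) : ℤ) : ℝ) * f (r k)
        = ∑ j ∈ Finset.univ.image r, ((A i j : ℤ) : ℝ) * f j :=
          (Finset.sum_image (f := fun j => ((A i j : ℤ) : ℝ) * f j)
            (fun x _ y _ h => hrinj h)).symm
      _ = ∑ j, ((A i j : ℤ) : ℝ) * f j := by
          refine Finset.sum_subset (Finset.subset_univ _) (fun j _ hj => ?_)
          have hfj : f j = 0 := by
            by_contra hfj
            obtain ⟨k, rfl⟩ := hrsupp j hfj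
            exact hj (Finset.mem_image_of_mem r (Finset.mem_univ k))
          rw [hfj, mul_zero]
  have hMg : M.mulVec (fun k => f (r k)) = w := by
    funext i
    have h0 := congrFun hNg i
    simp only [Matrix.mulVec, dotProduct, Matrix.of_apply] at h0 ⊢
    show ∑ k, ((A i (r k) : ℤ) : ℝ) / (γ:ℝ) * f (r k) = ((b i : ℤ) : ℝ) / (γ:ℝ)
    rw [← h0, Finset.sum_div]
    exact Finset.sum_congr rfl fun k _ => (div_mul_eq_mul_div _ _ _)
  -- Cramer's rule
  have hcr : Matrix.cramer M w = M.det • (fun k => f (r k)) := by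
    rw [← hMg, Matrix.cramer_eq_adjugate_mulVec, Matrix.mulVec_mulVec, Matrix.adjugate_mul,
      Matrix.smul_mulVec, Matrix.one_mulVec]
  have key : ∀ k, M.det * f (r k) = Matrix.cramer M w k := by
    intro k
    rw [hcr]
    rfl
  -- determinant bounds
  have hMbound : |M.det| ≤ D := by
    have := hD (n'+1) (Or.inr rfl) id r Function.injective_id hrinj
    exact this
  have hMdet_int : M.det = ((M'.det : ℤ) : ℝ) := by
    rw [hM_map]
    exact (RingHom.map_det (Int.castRingHom ℝ) M').symm
  have hMone : (1:ℝ) ≤ |M.det| := by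
    rw [hMdet_int]
    have hne : M'.det ≠ 0 := by
      intro h
      apply hMdet_ne
      rw [hMdet_int, h, Int.cast_zero]
    exact_mod_cast Int.one_le_abs hne
  have hcof : ∀ (i k : Fin (n'+1)), |(M.updateCol k (Pi.single i 1)).det| ≤ D := by
    intro i k
    rw [aux_det_updateCol_single]
    have := hD n' (Or.inl (by omega)) (Fin.succAbove i) (r ∘ Fin.succAbove k)
      (Fin.succAbove_right_injective) (hrinj.comp Fin.succAbove_right_injective)
    exact this
  -- bound on the numerator of Cramer's rule
  have hnum : ∀ k, |Matrix.cramer M w k| ≤ D * ∑ i, |w i| := by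
    intro k
    have hw : w = ∑ i, Pi.single i (w i) := (Finset.univ_sum_single w).symm
    have hexp : Matrix.cramer M w k = ∑ i, w i * Matrix.cramer M (Pi.single i 1) k := by
      conv_lhs => rw [hw]
      rw [map_sum, Finset.sum_apply]
      refine Finset.sum_congr rfl fun i _ => ?_
      have hsingle : Pi.single i (w i) = w i • (Pi.single i 1 : Fin (n'+1) → ℝ) := by
        rw [← Pi.single_smul' i (w i) (1:ℝ), smul_eq_mul, mul_one]
      rw [hsingle, map_smul]
      simp [smul_eq_mul]
    rw [hexp]
    calc |∑ i, w i * Matrix.cramer M (Pi.single i 1) k|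
        ≤ ∑ i, |w i * Matrix.cramer M (Pi.single i 1) k| :=
          Finset.abs_sum_le_sum_abs _ _
      _ ≤ ∑ i, |w i| * D := by
          refine Finset.sum_le_sum fun i _ => ?_
          rw [abs_mul]
          exact mul_le_mul_of_nonneg_left
            (by rw [Matrix.cramer_apply]; exact hcof i k) (abs_nonneg _)
      _ = D * ∑ i, |w i| := by rw [← Finset.sum_mul, mul_comm]
  constructor
  · -- upper bound
    intro j
    by_cases hfj : f j = 0
    · rw [hfj, abs_zero]
      exact mul_nonneg hDpos.le (Finset.sum_nonneg fun i _ => abs_nonneg _)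
    · obtain ⟨k, rfl⟩ := hrsupp j hfj
      have h1 : |M.det| * |f (r k)| = |Matrix.cramer M w k| := by rw [← abs_mul, key k]
      calc |f (r k)| ≤ |M.det| * |f (r k)| :=
            le_mul_of_one_le_left (abs_nonneg _) hMone
        _ = |Matrix.cramer M w k| := h1
        _ ≤ D * ∑ i, |(b i : ℝ) / (γ : ℝ)| := hnum k
  · -- lower bound
    intro j hj
    obtain ⟨k, rfl⟩ := hrsupp j hj
    have hcne : Matrix.cramer M w k ≠ 0 := by
      rw [← key k]
      exact mul_ne_zero hMdet_ne hj
    have hsw : (γ:ℝ) • w = fun i => (b i : ℝ) := by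
      funext i
      show (γ:ℝ) * ((b i : ℝ) / (γ:ℝ)) = (b i : ℝ)
      field_simp
    have hscale : (γ:ℝ) * Matrix.cramer M w k
        = (M.updateCol k (fun i => (b i : ℝ))).det := by
      rw [Matrix.cramer_apply, ← Matrix.det_updateCol_smul, hsw]
    have hint : (M.updateCol k (fun i => (b i : ℝ))).det
        = (((M'.updateCol k b).det : ℤ) : ℝ) := by
      have hmap2 : M.updateCol k (fun i => (b i : ℝ))
          = (M'.updateCol k b).map (Int.cast : ℤ → ℝ) := by
        rw [Matrix.map_updateCol, ← hM_map]
        rfl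
      rw [hmap2]
      exact (RingHom.map_det (Int.castRingHom ℝ) (M'.updateCol k b)).symm
    have hc0 : (M'.updateCol k b).det ≠ 0 := by
      intro h
      apply hcne
      have h2 : (γ:ℝ) * Matrix.cramer M w k = 0 := by
        rw [hscale, hint, h, Int.cast_zero]
      rcases mul_eq_zero.1 h2 with h' | h'
      · exact absurd h' hγr0.ne'
      · exact h'
    have h1γ : 1 ≤ (γ:ℝ) * |Matrix.cramer M w k| := by
      have habs : |(γ:ℝ) * Matrix.cramer M w k| = (γ:ℝ) * |Matrix.cramer M w k| := by
        rw [abs_mul, abs_of_pos hγr0]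
      rw [← habs, hscale, hint]
      exact_mod_cast Int.one_le_abs hc0
    have hdd : |M.det| * |f (r k)| = |Matrix.cramer M w k| := by rw [← abs_mul, key k]
    have hDγpos : (0:ℝ) < D * (γ:ℝ) := mul_pos hDpos hγr0
    rw [div_le_iff₀ hDγpos]
    calc (1:ℝ) ≤ (γ:ℝ) * |Matrix.cramer M w k| := h1γ
      _ = (γ:ℝ) * (|M.det| * |f (r k)|) := by rw [hdd]
      _ ≤ (γ:ℝ) * (D * |f (r k)|) := by
          refine mul_le_mul_of_nonneg_left ?_ hγr0.le
          exact mul_le_mul_of_nonneg_right hMbound (abs_nonneg _)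
      _ = |f (r k)| * (D * (γ:ℝ)) := by ring
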